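/- A graph G is chordal if and only if G is the intersection graph of a family of subtrees of a tree. -/

import Mathlib

/-- A graph is chordal if every cycle of length greater than 3 has a chord. -/
def IsChordal {V : Type*} (G : SimpleGraph V) : Prop :=
  ∀ (u : V) (c : G.Walk u u), c.IsCycle → 3 < c.length →
    ∃ x y, x ∈ c.support ∧ y ∈ c.support ∧ G.Adj x y ∧ s(x, y) ∉ c.edges


section GavrilAux
open SimpleGraph Walk
variable {V : Type*} {G : SimpleGraph V}




lemma walk_edge_getVert {u v : V} (p : G.Walk u v) {e : Sym2 V} (he : e ∈ p.edges) :
    ∃ i < p.length, e = s(p.getVert i, p.getVert (i + 1)) := by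
  induction p with
  | nil => simp at he
  | cons h q ih =>
    rw [Walk.edges_cons, List.mem_cons] at he
    rcases he with he | he
    · exact ⟨0, by simp, by simp [he, Walk.getVert_zero, Walk.getVert_cons_succ]⟩
    · obtain ⟨i, hi, hei⟩ := ih he
      exact ⟨i + 1, by simpa using hi, by simpa [Walk.getVert_cons_succ] using hei⟩

lemma getVert_eq_support_getElem {u v : V} (p : G.Walk u v) {i : ℕ} (hi : i ≤ p.length) :
    p.getVert i = p.support[i]'(by rw [Walk.length_support]; omega) := by
  induction p generalizing i with
  | nil =>
    have : i = 0 := by simpa using hi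
    subst this; simp
  | cons h q ih =>
    cases i with
    | zero => simp
    | succ n =>
      rw [Walk.getVert_cons_succ]
      have := ih (i := n) (by simpa using hi)
      simpa using this

/-- Distinctness of `getVert`s on a cycle. -/
lemma cycle_getVert_ne {u : V} {c : G.Walk u u} (hc : c.IsCycle) {i j : ℕ}
    (hij : i < j) (hj : j ≤ c.length) (hne : ¬(i = 0 ∧ j = c.length)) :
    c.getVert i ≠ c.getVert j := by
  have hnod : c.support.tail.Nodup := hc.2
  have hlen3 : 3 ≤ c.length := hc.three_le_length
  have hsl : c.support.length = c.length + 1 := c.length_support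
  have htl : c.support.tail.length = c.length := by simp [List.length_tail, hsl]
  intro heq
  rw [_root_.getVert_eq_support_getElem c (by omega : i ≤ c.length),
      _root_.getVert_eq_support_getElem c hj] at heq
  have hget : ∀ (k : ℕ) (hk : k + 1 < c.support.length),
      c.support[k + 1] = c.support.tail[k]'(by omega) := by
    intro k hk
    rw [List.getElem_tail]
  rcases Nat.eq_zero_or_pos i with hi0 | hipos
  · subst hi0
    have hjlt : j < c.length := by omega
    have h0 : c.support[0]'(by omega) = c.support[c.length]'(by omega) := by
      rw [← _root_.getVert_eq_support_getElem c (le_refl c.length),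
          ← _root_.getVert_eq_support_getElem c (Nat.zero_le _)]
      rw [Walk.getVert_length, Walk.getVert_zero]
    have e1 : c.support.tail[j - 1]'(by omega) = c.support.tail[c.length - 1]'(by omega) := by
      rw [← hget (j-1) (by omega), ← hget (c.length - 1) (by omega)]
      have hj'' : j - 1 + 1 = j := by omega
      have hl'' : c.length - 1 + 1 = c.length := by omega
      simp_rw [hj'', hl'']
      rw [← heq, h0]
    have := hnod.getElem_inj_iff.mp e1
    omega
  · have e1 : c.support.tail[i - 1]'(by omega) = c.support.tail[j - 1]'(by omega) := by
      rw [← hget (i-1) (by omega), ← hget (j-1) (by omega)]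
      have hi'' : i - 1 + 1 = i := by omega
      have hj'' : j - 1 + 1 = j := by omega
      simp_rw [hi'', hj'']; exact heq
    have := hnod.getElem_inj_iff.mp e1
    omega

lemma cycle_getVert_eq_cases {u : V} {c : G.Walk u u} (hc : c.IsCycle) {i j : ℕ}
    (hi : i ≤ c.length) (hj : j ≤ c.length) (h : c.getVert i = c.getVert j) :
    i = j ∨ (i = 0 ∧ j = c.length) ∨ (j = 0 ∧ i = c.length) := by
  by_contra hcon
  push_neg at hcon
  obtain ⟨h1, h2, h3⟩ := hcon
  rcases Nat.lt_or_ge i j with hij | hij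
  · exact cycle_getVert_ne hc hij hj (by tauto) h
  · have : j < i := by omega
    exact cycle_getVert_ne hc this hi (by tauto) h.symm



-- walk in G with support in s gives reachability in induce
lemma reachable_induce_of_walk {s : Set V} {u v : V} (p : G.Walk u v)
    (hp : ∀ x ∈ p.support, x ∈ s) :
    (G.induce s).Reachable ⟨u, hp u p.start_mem_support⟩ ⟨v, hp v p.end_mem_support⟩ := by
  induction p with
  | nil => rfl
  | cons h q ih =>
    have hq : ∀ x ∈ q.support, x ∈ s := fun x hx => hp x (by simp [hx])
    have hadj : (G.induce s).Adj ⟨_, hp _ (Walk.start_mem_support _)⟩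
        ⟨_, hq _ q.start_mem_support⟩ := by
      simpa using h
    exact (hadj.reachable).trans (ih hq)

-- walk in induce s gives a walk in G with support in s
lemma walk_of_induce_walk {s : Set V} {a b : s} (p : (G.induce s).Walk a b) :
    ∃ q : G.Walk a.1 b.1, ∀ x ∈ q.support, x ∈ s := by
  induction p with
  | nil => exact ⟨Walk.nil, by simp⟩
  | @cons x y _ h q ih =>
    obtain ⟨q', hq'⟩ := ih
    have hadj : G.Adj x.1 y.1 := by simpa using h
    exact ⟨Walk.cons hadj q', by
      intro z hz
      rw [Walk.support_cons, List.mem_cons] at hz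
      rcases hz with rfl | hz
      · exact x.2
      · exact hq' z hz⟩

/-- A set is path-closed if the support of any path between two of its members stays inside. -/
def PathClosed (G : SimpleGraph V) (s : Set V) : Prop :=
  ∀ x y, x ∈ s → y ∈ s → ∀ p : G.Walk x y, p.IsPath → ∀ z ∈ p.support, z ∈ s

lemma IsPath.eq_nil_of_loop {x : V} {p : G.Walk x x} (hp : p.IsPath) : p = Walk.nil := by
  cases p with
  | nil => rfl
  | cons h q =>
    exfalso
    rw [Walk.cons_isPath_iff] at hp
    exact hp.2 q.end_mem_support

lemma pathClosed_of_connected (hT : G.IsAcyclic) {s : Set V}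
    (hc : (G.induce s).Connected) : PathClosed G s := by
  classical
  intro x y hx hy p hp z hz
  obtain ⟨q, hq⟩ := walk_of_induce_walk ((hc ⟨x, hx⟩ ⟨y, hy⟩).some)
  have hq' : q.toPath.1.IsPath := q.toPath.2
  have hpe : p = (q.toPath : G.Walk x y) :=
    congrArg Subtype.val (hT.path_unique (⟨p, hp⟩ : G.Path x y) q.toPath)
  exact hq z (q.support_toPath_subset (hpe ▸ hz))

lemma connected_of_pathClosed (hT : G.Connected) {s : Set V} (hs : s.Nonempty)
    (hpc : PathClosed G s) : (G.induce s).Connected := by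
  classical
  obtain ⟨x₀, hx₀⟩ := hs
  rw [connected_iff_exists_forall_reachable]
  refine ⟨⟨x₀, hx₀⟩, ?_⟩
  rintro ⟨v, hv⟩
  obtain ⟨w⟩ := hT x₀ v
  have hsup : ∀ z ∈ (w.toPath : G.Walk x₀ v).support, z ∈ s :=
    fun z hz => hpc x₀ v hx₀ hv _ w.toPath.2 z hz
  exact reachable_induce_of_walk _ hsup

lemma pathClosed_inter {s t : Set V} (hs : PathClosed G s) (ht : PathClosed G t) :
    PathClosed G (s ∩ t) := fun x y hx hy p hp z hz =>
  ⟨hs x y hx.1 hy.1 p hp z hz, ht x y hx.2 hy.2 p hp z hz⟩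

/-- append of paths meeting only at the junction is a path -/
lemma isPath_append_of_inter : ∀ {a m c : V} (p : G.Walk a m) (d : G.Walk m c),
    p.IsPath → d.IsPath → (∀ z, z ∈ p.support → z ∈ d.support → z = m) →
    (p.append d).IsPath
  | _, _, _, Walk.nil, d, _, hd, _ => by simpa using hd
  | a, m, c, Walk.cons (v := y) h q, d, hp, hd, hint => by
    rw [Walk.cons_isPath_iff] at hp
    rw [Walk.cons_append, Walk.cons_isPath_iff]
    refine ⟨isPath_append_of_inter q d hp.1 hd
      (fun z hz1 hz2 => hint z (by simp [hz1]) hz2), ?_⟩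
    rw [Walk.mem_support_append_iff]
    rintro (hx | hx)
    · exact hp.2 hx
    · have hxm : a = m := hint a (by simp) hx
      subst hxm
      exact hp.2 (q.end_mem_support)

/-- first meeting point of a path with a set -/
lemma exists_first_meet : ∀ {a b : V} (p : G.Walk a b), p.IsPath → ∀ (Q : Set V), b ∈ Q →
    ∃ m ∈ Q, ∃ p₁ : G.Walk a m, p₁.IsPath ∧ (∀ z ∈ p₁.support, z ∈ p.support) ∧
      (∀ z ∈ p₁.support, z ≠ m → z ∉ Q)
  | a, _, Walk.nil, hp, Q, hb => ⟨a, hb, Walk.nil, by simp, by simp, by simp⟩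
  | x, b, Walk.cons (v := y) h q, hp, Q, hb => by
    classical
    by_cases hx : x ∈ Q
    · exact ⟨x, hx, Walk.nil, by simp, by simp, by simp⟩
    · obtain ⟨m, hm, p₁, hp₁, hsub, havoid⟩ := exists_first_meet q ((Walk.cons_isPath_iff h q).mp hp).1 Q hb
      refine ⟨m, hm, Walk.cons h p₁, ?_, ?_, ?_⟩
      · rw [Walk.cons_isPath_iff]
        exact ⟨hp₁, fun hmem => ((Walk.cons_isPath_iff h q).mp hp).2 (hsub x hmem)⟩
      · intro z hz
        rw [Walk.support_cons, List.mem_cons] at hz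
        rcases hz with rfl | hz
        · simp
        · simp [hsub z hz]
      · intro z hz hzm
        rw [Walk.support_cons, List.mem_cons] at hz
        rcases hz with rfl | hz
        · exact hx
        · exact havoid z hz hzm

/-- median: the three paths between three vertices of an acyclic graph share a vertex -/
lemma median_lemma (hT : G.IsAcyclic) {a b c : V}
    (p : G.Walk a b) (hp : p.IsPath) (q : G.Walk b c) (hq : q.IsPath)
    (r : G.Walk a c) (hr : r.IsPath) :
    ∃ m, m ∈ p.support ∧ m ∈ q.support ∧ m ∈ r.support := by
  classical
  obtain ⟨m, hmQ, p₁, hp₁, hsub, havoid⟩ :=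
    exists_first_meet p hp {z | z ∈ q.support} q.start_mem_support
  have hmq : m ∈ q.support := hmQ
  have hd : (q.dropUntil m hmq).IsPath := hq.dropUntil hmq
  have hr' : (p₁.append (q.dropUntil m hmq)).IsPath := by
    refine isPath_append_of_inter _ _ hp₁ hd ?_
    intro z hz1 hz2
    by_contra hzm
    exact havoid z hz1 hzm (q.support_dropUntil_subset hmq hz2)
  have : (⟨r, hr⟩ : G.Path a c) = ⟨p₁.append (q.dropUntil m hmq), hr'⟩ := hT.path_unique _ _
  have hmr : m ∈ r.support := by
    have : r = p₁.append (q.dropUntil m hmq) := congrArg Subtype.val this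
    rw [this, Walk.mem_support_append_iff]
    left; exact p₁.end_mem_support
  exact ⟨m, hsub m p₁.end_mem_support, hmq, hmr⟩
section Sides
variable {ι : Type*} {T : SimpleGraph ι}

/-- side of an edge: vertices reachable from α without using edge s(α,β) -/
def EdgeSide (T : SimpleGraph ι) (α β : ι) (x : ι) : Prop :=
  (T.deleteEdges {s(α, β)}).Reachable x α

lemma tree_isBridge (hT : T.IsTree) {α β : ι} (hadj : T.Adj α β) :
    T.IsBridge s(α, β) :=
  (isAcyclic_iff_forall_edge_isBridge.mp hT.2) (by simpa using hadj)

lemma side_total (hT : T.IsTree) {α β : ι} (hadj : T.Adj α β) (x : ι) :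
    EdgeSide T α β x ∨ EdgeSide T β α x := by
  classical
  obtain ⟨w⟩ := hT.1 x α
  set p : T.Walk x α := (w.toPath : T.Walk x α) with hpdef
  have hp : p.IsPath := w.toPath.2
  by_cases he : s(α, β) ∈ p.edges
  · have hβ : β ∈ p.support := p.snd_mem_support_of_mem_edges he
    have htU : s(α, β) ∉ (p.takeUntil β hβ).edges := by
      intro hetU
      have hα1 : α ∈ (p.takeUntil β hβ).support :=
        Walk.fst_mem_support_of_mem_edges _ hetU
      have hαβ : α ≠ β := hadj.ne
      -- α also in dropUntil's tail; contradicts nodup of p.support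
      have hspec := p.take_spec hβ
      have hnodup : p.support.Nodup := hp.2
      rw [← hspec, Walk.support_append] at hnodup
      have hdisj := (List.nodup_append.mp hnodup).2.2
      have hα2 : α ∈ (p.dropUntil β hβ).support.tail := by
        have hαd : α ∈ (p.dropUntil β hβ).support := Walk.end_mem_support _
        rw [Walk.support_eq_cons] at hαd
        rcases List.mem_cons.mp hαd with h1 | h1
        · exact absurd h1 hαβ
        · exact h1
      exact hdisj α hα1 α hα2 rfl
    exact Or.inr ⟨(p.takeUntil β hβ).toDeleteEdges {s(β, α)} (fun e hee hmem => by
      simp only [Set.mem_singleton_iff] at hmem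
      rw [hmem, Sym2.eq_swap] at hee
      exact htU hee)⟩
  · exact Or.inl ⟨p.toDeleteEdges {s(α, β)} (fun e hee hmem => by
      simp only [Set.mem_singleton_iff] at hmem
      exact he (hmem ▸ hee))⟩

lemma side_disjoint (hT : T.IsTree) {α β : ι} (hadj : T.Adj α β) (x : ι) :
    ¬(EdgeSide T α β x ∧ EdgeSide T β α x) := by
  rintro ⟨h1, h2⟩
  simp only [EdgeSide] at h1 h2
  rw [show (s(β, α) : Sym2 ι) = s(α, β) from Sym2.eq_swap] at h2
  have hbr := tree_isBridge hT hadj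
  rw [isBridge_iff_adj_and_forall_walk_mem_edges] at hbr
  have hreach : (T.deleteEdges {s(α, β)}).Reachable α β := h1.symm.trans h2
  obtain ⟨w⟩ := hreach
  have hw : s(α, β) ∈ (w.transfer T (fun e hee => by
      have := w.edges_subset_edgeSet hee
      rw [SimpleGraph.edgeSet_deleteEdges] at this
      exact this.1)).edges := hbr _
  rw [Walk.edges_transfer] at hw
  have := w.edges_subset_edgeSet hw
  rw [SimpleGraph.edgeSet_deleteEdges] at this
  simp at this

lemma side_cross (hT : T.IsTree) {α β : ι} (hadj : T.Adj α β) {x y : ι}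
    (hx : EdgeSide T α β x) (hy : EdgeSide T β α y) (w : T.Walk x y) :
    s(α, β) ∈ w.edges := by
  by_contra he
  have hw : (T.deleteEdges {s(α,β)}).Reachable x y :=
    ⟨w.toDeleteEdges {s(α,β)} (fun e hee hmem => by
      simp only [Set.mem_singleton_iff] at hmem
      exact he (hmem ▸ hee))⟩
  exact side_disjoint hT hadj y ⟨(hw.symm.trans hx), hy⟩

/-- both endpoints of the bridge belong to a path-closed set meeting both sides -/
lemma mem_of_cross (hT : T.IsTree) {α β : ι} (hadj : T.Adj α β) {S : Set ι}
    (hpc : PathClosed T S) {x y : ι} (hxS : x ∈ S) (hyS : y ∈ S)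
    (hx : EdgeSide T α β x) (hy : EdgeSide T β α y) : α ∈ S ∧ β ∈ S := by
  classical
  obtain ⟨w⟩ := hT.1 x y
  have hp : (w.toPath : T.Walk x y).IsPath := w.toPath.2
  have he : s(α, β) ∈ (w.toPath : T.Walk x y).edges := side_cross hT hadj hx hy _
  have hαm : α ∈ (w.toPath : T.Walk x y).support := Walk.fst_mem_support_of_mem_edges _ he
  have hβm : β ∈ (w.toPath : T.Walk x y).support := Walk.snd_mem_support_of_mem_edges _ he
  exact ⟨hpc x y hxS hyS _ hp α hαm, hpc x y hxS hyS _ hp β hβm⟩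

/-- first exit of a walk ending in a set -/
lemma exists_exit (S' : Set ι) : ∀ {c d : ι} (w : T.Walk c d), c ∉ S' → d ∈ S' →
    ∃ β α : ι, T.Adj β α ∧ β ∉ S' ∧ α ∈ S' ∧
      ∃ q : T.Walk c β, ∀ z ∈ q.support, z ∉ S'
  | c, _, Walk.nil, hc, hd => absurd hd hc
  | c, d, Walk.cons (v := c') h w, hc, hd => by
    classical
    by_cases hc' : c' ∈ S'
    · exact ⟨c, c', h, hc, hc', Walk.nil, by simpa using hc⟩
    · obtain ⟨β, α, hadj, hβ, hα, q, hq⟩ := exists_exit S' w hc' hd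
      refine ⟨β, α, hadj, hβ, hα, Walk.cons h q, ?_⟩
      intro z hz
      rw [Walk.support_cons, List.mem_cons] at hz
      rcases hz with rfl | hz
      · exact hc
      · exact hq z hz

end Sides
section Backward
variable {ι : Type*} {T : SimpleGraph ι}

lemma isChordal_of_subtrees {V : Type*} {G : SimpleGraph V} {ι : Type*} {T : SimpleGraph ι}
    {f : V → Set ι} (hT : T.IsTree) (hne : ∀ v, (f v).Nonempty)
    (hconn : ∀ v, (T.induce (f v)).Connected)
    (hiff : ∀ u v : V, u ≠ v → (G.Adj u v ↔ (f u ∩ f v).Nonempty)) :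
    IsChordal G := by
  classical
  intro u c hc hlen
  by_contra hchord
  push_neg at hchord
  set n := c.length with hn
  have hn4 : 4 ≤ n := hlen
  have hpc : ∀ v : V, PathClosed T (f v) := fun v => pathClosed_of_connected hT.2 (hconn v)
  have hmem : ∀ i, i ≤ n → c.getVert i ∈ c.support := fun i hi =>
    Walk.mem_support_iff_exists_getVert.mpr ⟨i, rfl, hi⟩
  -- non-consecutive vertices have disjoint subtrees
  have hdisj : ∀ i j, i + 2 ≤ j → j ≤ n → j - i ≤ n - 2 →
      f (c.getVert i) ∩ f (c.getVert j) = ∅ := by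
    intro i j h2 hjn hn2
    rw [← Set.not_nonempty_iff_eq_empty]
    rintro ⟨z, hz⟩
    have hnev : c.getVert i ≠ c.getVert j :=
      cycle_getVert_ne hc (by omega) hjn (by omega)
    have hadj : G.Adj (c.getVert i) (c.getVert j) := (hiff _ _ hnev).mpr ⟨z, hz⟩
    have hedge := hchord _ _ (hmem i (by omega)) (hmem j hjn) hadj
    obtain ⟨k, hk, hkeq⟩ := walk_edge_getVert c hedge
    rw [Sym2.eq_iff] at hkeq
    rcases hkeq with ⟨h1, h2'⟩ | ⟨h1, h2'⟩
    · rcases cycle_getVert_eq_cases hc (by omega) (by omega) h1 with h | h | h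
      · subst h
        rcases cycle_getVert_eq_cases hc hjn (by omega) h2' with h' | h' | h' <;> omega
      · omega
      · omega
    · rcases cycle_getVert_eq_cases hc (by omega : i ≤ n) (by omega : k + 1 ≤ n) h1 with h | h | h
      · subst h
        rcases cycle_getVert_eq_cases hc hjn (by omega : k ≤ n) h2' with h' | h' | h' <;> omega
      · obtain ⟨hi0, hkn⟩ := h
        rw [show k = n - 1 by omega] at h2'
        rcases cycle_getVert_eq_cases hc hjn (by omega : n - 1 ≤ n) h2' with h' | h' | h' <;> omega
      · omega
  have ht : ∀ i, i < n → (f (c.getVert i) ∩ f (c.getVert (i + 1))).Nonempty := by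
    intro i hi
    have hadj := c.adj_getVert_succ hi
    exact (hiff _ _ hadj.ne).mp hadj
  choose t htmem using ht
  have h02 : f (c.getVert 0) ∩ f (c.getVert 2) = ∅ := hdisj 0 2 le_rfl (by omega) (by omega)
  set S0 := f (c.getVert 0) with hS0
  set S1 := f (c.getVert 1) with hS1
  set S2 := f (c.getVert 2) with hS2
  have ht0 := htmem 0 (by omega)
  have ht1 := htmem 1 (by omega)
  have ht0S0 : t 0 (by omega : (0:ℕ) < n) ∈ S0 := ht0.1
  have ht1S2 : t 1 (by omega : (1:ℕ) < n) ∈ S2 := ht1.2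
  have ht1nS0 : t 1 (by omega : (1:ℕ) < n) ∉ S0 := by
    intro hmem'
    have : t 1 (by omega : (1:ℕ) < n) ∈ S0 ∩ S2 := ⟨hmem', ht1S2⟩
    rw [h02] at this; exact this
  -- find the separating edge
  obtain ⟨w10⟩ := hT.1 (t 1 (by omega)) (t 0 (by omega))
  obtain ⟨β, α, hadjβα, hβnS0, hαS0, q, hq⟩ :=
    exists_exit S0 (w10.toPath : T.Walk _ _) ht1nS0 ht0S0
  have hadjαβ : T.Adj α β := hadjβα.symm
  -- t 1 is on the β-side
  have ht1B : EdgeSide T β α (t 1 (by omega)) := by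
    refine ⟨q.toDeleteEdges {s(β, α)} (fun e hee hmem' => ?_)⟩
    simp only [Set.mem_singleton_iff] at hmem'
    subst hmem'
    exact hq α (q.snd_mem_support_of_mem_edges hee) hαS0
  -- all of S0 is on the α-side
  have hS0A : ∀ z ∈ S0, EdgeSide T α β z := by
    intro z hz
    obtain ⟨wza⟩ := hT.1 z α
    refine ⟨(wza.toPath : T.Walk z α).toDeleteEdges {s(α, β)} (fun e hee hmem' => ?_)⟩
    simp only [Set.mem_singleton_iff] at hmem'
    subst hmem'
    have hβsup : β ∈ (wza.toPath : T.Walk z α).support :=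
      Walk.snd_mem_support_of_mem_edges _ hee
    exact hβnS0 (hpc _ z α hz hαS0 _ wza.toPath.2 β hβsup)
  -- all of S2 is on the β-side
  have hS2B : ∀ z ∈ S2, EdgeSide T β α z := by
    intro z hz
    rcases side_total hT hadjαβ z with hA | hB
    · exfalso
      obtain ⟨wz1⟩ := hT.1 z (t 1 (by omega))
      set pz : T.Walk z (t 1 (by omega : (1:ℕ) < n)) := wz1.toPath.val with hpz
      have hpzp : pz.IsPath := wz1.toPath.2
      have hcross := side_cross hT hadjαβ hA ht1B pz
      have hαsup : α ∈ pz.support := Walk.fst_mem_support_of_mem_edges pz hcross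
      have : α ∈ S2 := hpc _ z _ hz ht1S2 pz hpzp α hαsup
      have : α ∈ S0 ∩ S2 := ⟨hαS0, this⟩
      rw [h02] at this; exact this
    · exact hB
  -- t (n-1) is in S0 (since getVert n = getVert 0), hence on the α-side
  have hwn : c.getVert n = c.getVert 0 := by
    rw [Walk.getVert_zero, hn, Walk.getVert_length]
  have htn1 := htmem (n - 1) (by omega)
  have htn1S0 : t (n-1) (by omega : n - 1 < n) ∈ S0 := by
    have := htn1.2
    rw [show n - 1 + 1 = n by omega, hwn] at this
    exact this
  have htn1A : EdgeSide T α β (t (n-1) (by omega)) := hS0A _ htn1S0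
  -- minimal j in [2, n-1] with t j on the α-side
  have hex : ∃ j, 2 ≤ j ∧ j ≤ n - 1 ∧ ∃ hj : j < n, EdgeSide T α β (t j hj) :=
    ⟨n - 1, by omega, le_rfl, by omega, htn1A⟩
  set j := Nat.find hex with hjdef
  obtain ⟨hj2, hjn1, hjlt, hjA⟩ := Nat.find_spec hex
  -- t (j-1) is on the β-side
  have htj1B : EdgeSide T β α (t (j-1) (by omega : j - 1 < n)) := by
    rcases Nat.lt_or_ge (j-1) 2 with h | h
    · have hj1 : j - 1 = 1 := by omega
      simp_rw [hj1]
      exact ht1B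
    · rcases side_total hT hadjαβ (t (j-1) (by omega)) with hA | hB
      · exfalso
        have := Nat.find_min hex (m := j - 1) (by omega)
        push_neg at this
        exact absurd hA (by
          have h3 := this h (by omega) (by omega : j - 1 < n)
          exact h3)
      · exact hB
  -- both α and β lie in f (getVert j) and in S1
  have hmj : α ∈ f (c.getVert j) := by
    have h1 : t j hjlt ∈ f (c.getVert j) := (htmem j hjlt).1
    have h2 : t (j-1) (by omega) ∈ f (c.getVert j) := by
      have := (htmem (j-1) (by omega)).2
      rw [show j - 1 + 1 = j by omega] at this
      exact this
    exact (mem_of_cross hT hadjαβ (hpc _) h1 h2 hjA htj1B).1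
  have hmS1 : α ∈ S1 := by
    have hA0 : EdgeSide T α β (t 0 (by omega)) := hS0A _ ht0S0
    exact (mem_of_cross hT hadjαβ (hpc _) ht0.2 ht1.1 hA0 ht1B).1
  rcases Nat.lt_or_ge j 3 with hj3 | hj3
  · -- j = 2 : α ∈ S0 ∩ S2
    have hj2' : j = 2 := by omega
    rw [hj2'] at hmj
    have : α ∈ S0 ∩ S2 := ⟨hαS0, hmj⟩
    rw [h02] at this; exact this
  · -- 3 ≤ j ≤ n-1 : α ∈ S1 ∩ f (getVert j) contradicts hdisj
    have := hdisj 1 j (by omega) (by omega) (by omega)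
    have : α ∈ (∅ : Set ι) := this ▸ (⟨hmS1, hmj⟩ : α ∈ S1 ∩ f (c.getVert j))
    exact this
end Backward
section Fwd1
variable {W : Type*} {H : SimpleGraph W}

/-- shortcut: a chord of a walk yields a strictly shorter walk inside its support -/
lemma walk_shortcut : ∀ {x y : W} (p : H.Walk x y) {a b : W}, a ∈ p.support → b ∈ p.support →
    H.Adj a b → s(a, b) ∉ p.edges →
    ∃ w : H.Walk x y, (∀ z ∈ w.support, z ∈ p.support) ∧ w.length < p.length
  | x, _, Walk.nil, a, b, ha, hb, hadj, he => by
    simp only [Walk.support_nil, List.mem_singleton] at ha hb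
    exact absurd (ha ▸ hb ▸ rfl : a = b) hadj.ne
  | x, y, Walk.cons (v := x') h q, a, b, ha, hb, hadj, he => by
    classical
    rw [Walk.support_cons, List.mem_cons] at ha hb
    by_cases hax : a = x
    · subst hax
      have hbq : b ∈ q.support := by
        rcases hb with rfl | hb
        · exact absurd rfl hadj.ne
        · exact hb
      have hbx' : x' ≠ b := by
        rintro rfl
        exact he (by simp)
      refine ⟨Walk.cons hadj (q.dropUntil b hbq), ?_, ?_⟩
      · intro z hz
        rw [Walk.support_cons, List.mem_cons] at hz
        rcases hz with rfl | hz
        · simp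
        · simp [q.support_dropUntil_subset hbq hz]
      · have hspec := q.take_spec hbq
        have hlen := congrArg Walk.length hspec
        rw [Walk.length_append] at hlen
        have htk : (q.takeUntil b hbq).length ≠ 0 := by
          intro h0
          exact hbx' ((q.takeUntil b hbq).eq_of_length_eq_zero h0)
        simp only [Walk.length_cons]
        omega
    · by_cases hbx : b = x
      · subst hbx
        have haq : a ∈ q.support := by
          rcases ha with rfl | ha
          · exact absurd rfl hadj.ne
          · exact ha
        have hax' : x' ≠ a := by
          rintro rfl
          exact he (by rw [Sym2.eq_swap]; simp)
        refine ⟨Walk.cons hadj.symm (q.dropUntil a haq), ?_, ?_⟩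
        · intro z hz
          rw [Walk.support_cons, List.mem_cons] at hz
          rcases hz with rfl | hz
          · simp
          · simp [q.support_dropUntil_subset haq hz]
        · have hspec := q.take_spec haq
          have hlen := congrArg Walk.length hspec
          rw [Walk.length_append] at hlen
          have htk : (q.takeUntil a haq).length ≠ 0 := by
            intro h0
            exact hax' ((q.takeUntil a haq).eq_of_length_eq_zero h0)
          simp only [Walk.length_cons]
          omega
      · have haq : a ∈ q.support := ha.resolve_left hax
        have hbq : b ∈ q.support := hb.resolve_left hbx
        have heq : s(a, b) ∉ q.edges := fun hh => he (by simp [hh])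
        obtain ⟨w, hw1, hw2⟩ := walk_shortcut q haq hbq hadj heq
        refine ⟨Walk.cons h w, ?_, ?_⟩
        · intro z hz
          rw [Walk.support_cons, List.mem_cons] at hz
          rcases hz with rfl | hz
          · simp
          · simp [hw1 z hz]
        · simpa using hw2

/-- a length-1 walk's edge -/
lemma edge_mem_of_length_one : ∀ {a b : W} (p : H.Walk a b), p.length = 1 → s(a, b) ∈ p.edges
  | _, _, Walk.nil, hl => by simp at hl
  | a, b, Walk.cons h q, hl => by
    have : q.length = 0 := by simpa using hl
    have hb : _ = b := q.eq_of_length_eq_zero this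
    subst hb
    simp

/-- chordality is inherited by induced subgraphs -/
lemma isChordal_induce {V : Type*} {G : SimpleGraph V} (hG : IsChordal G) (s : Set V) :
    IsChordal (G.induce s) := by
  intro u c hc hlen
  classical
  let F : G.induce s →g G := ⟨Subtype.val, fun {a b} h => h⟩
  have hFinj : Function.Injective F := Subtype.val_injective
  have hc' : (c.map F).IsCycle := hc.map hFinj
  have hlen' : 3 < (c.map F).length := by rwa [Walk.length_map]
  obtain ⟨x, y, hx, hy, hadj, he⟩ := hG _ (c.map F) hc' hlen'
  rw [Walk.support_map, List.mem_map] at hx hy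
  obtain ⟨x₀, hx₀, rfl⟩ := hx
  obtain ⟨y₀, hy₀, rfl⟩ := hy
  refine ⟨x₀, y₀, hx₀, hy₀, hadj, ?_⟩
  intro hmem
  apply he
  rw [Walk.edges_map, List.mem_map]
  exact ⟨s(x₀, y₀), hmem, by simp [F]⟩

end Fwd1

section Helly
variable {ι : Type*} {T : SimpleGraph ι}

/-- Helly property for three subtrees -/
lemma helly_three (hT : T.IsTree) {S₁ S₂ S₃ : Set ι}
    (h₁ : PathClosed T S₁) (h₂ : PathClosed T S₂) (h₃ : PathClosed T S₃)
    (h12 : (S₁ ∩ S₂).Nonempty) (h23 : (S₂ ∩ S₃).Nonempty) (h13 : (S₁ ∩ S₃).Nonempty) :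
    (S₁ ∩ S₂ ∩ S₃).Nonempty := by
  classical
  obtain ⟨a, ha⟩ := h12
  obtain ⟨b, hb⟩ := h23
  obtain ⟨c, hcm⟩ := h13
  obtain ⟨wab⟩ := hT.1 a b
  obtain ⟨wbc⟩ := hT.1 b c
  obtain ⟨wac⟩ := hT.1 a c
  obtain ⟨m, hmp, hmq, hmr⟩ := median_lemma hT.2 wab.toPath.val wab.toPath.2
    wbc.toPath.val wbc.toPath.2 wac.toPath.val wac.toPath.2
  refine ⟨m, ⟨?_, ?_⟩, ?_⟩
  · exact h₁ a c ha.1 hcm.1 _ wac.toPath.2 m hmr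
  · exact h₂ a b ha.2 hb.1 _ wab.toPath.2 m hmp
  · exact h₃ b c hb.2 hcm.2 _ wbc.toPath.2 m hmq

/-- Helly property for finitely many subtrees -/
lemma helly_finset (hT : T.IsTree) {κ : Type*} (l : Finset κ) :
    ∀ (S : κ → Set ι), (∀ i ∈ l, PathClosed T (S i)) →
    (∀ i ∈ l, ∀ j ∈ l, (S i ∩ S j).Nonempty) → l.Nonempty → ∃ t, ∀ i ∈ l, t ∈ S i := by
  classical
  induction l using Finset.induction with
  | empty => intro S _ _ h; exact absurd h (by simp)
  | @insert i l hil ih =>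
    intro S hpc hint _
    rcases Finset.eq_empty_or_nonempty l with rfl | hlne
    · obtain ⟨t, ht⟩ := hint i (by simp) i (by simp)
      refine ⟨t, fun j hj => ?_⟩
      rw [Finset.mem_insert] at hj
      rcases hj with rfl | hj
      · exact ht.1
      · simp at hj
    · obtain ⟨t, ht⟩ := ih (fun j => S j ∩ S i)
        (fun j hj => pathClosed_inter (hpc j (by simp [hj])) (hpc i (by simp)))
        (fun j hj k hk => by
          have h3 := helly_three hT (hpc j (by simp [hj])) (hpc k (by simp [hk]))
            (hpc i (by simp))
            (hint j (by simp [hj]) k (by simp [hk])) (hint k (by simp [hk]) i (by simp))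
            (hint j (by simp [hj]) i (by simp))
          obtain ⟨z, hzm⟩ := h3
          exact ⟨z, ⟨⟨hzm.1.1, hzm.2⟩, ⟨hzm.1.2, hzm.2⟩⟩⟩)
        hlne
      refine ⟨t, fun j hj => ?_⟩
      rw [Finset.mem_insert] at hj
      rcases hj with rfl | hj
      · obtain ⟨k, hk⟩ := hlne
        exact (ht k hk).2
      · exact (ht j hj).1
end Helly
section Dirac

/-- a vertex is simplicial if its neighborhood is a clique -/
def Simplicial {W : Type*} (H : SimpleGraph W) (v : W) : Prop :=
  ∀ p q, H.Adj v p → H.Adj v q → p ≠ q → H.Adj p q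

/-- from a walk into s whose support meets S only possibly at s, extract a neighbor
of s reachable avoiding S and s -/
lemma reach_adj {W : Type*} {H : SimpleGraph W} (S : Set W) {a s : W} (p : H.Walk a s) :
    (∀ y ∈ p.support, y ≠ s → y ∉ S) → a ≠ s →
    ∃ x, H.Adj x s ∧ ∃ q : H.Walk a x, ∀ y ∈ q.support, y ∉ S ∧ y ≠ s := by
  classical
  induction p with
  | nil => exact fun _ hne => absurd rfl hne
  | @cons a c s h p ih =>
    intro hp hne
    by_cases hcs : c = s
    · subst hcs
      refine ⟨a, h, Walk.nil, ?_⟩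
      intro y hy
      rw [Walk.support_nil, List.mem_singleton] at hy
      subst hy
      exact ⟨hp y (by simp) hne, hne⟩
    · obtain ⟨x, hx, q, hq⟩ := ih (fun y hy hys => hp y (by simp [hy]) hys) hcs
      refine ⟨x, hx, Walk.cons h q, ?_⟩
      intro y hy
      rw [Walk.support_cons, List.mem_cons] at hy
      rcases hy with rfl | hy
      · exact ⟨hp y (by simp) hne, hne⟩
      · exact hq y hy

universe u

theorem dirac_strong : ∀ (n : ℕ) {V : Type u} [Fintype V] (G : SimpleGraph V),
    Fintype.card V = n → IsChordal G →
    (∀ u v : V, u ≠ v → G.Adj u v) ∨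
      (∃ s t : V, s ≠ t ∧ ¬G.Adj s t ∧ Simplicial G s ∧ Simplicial G t) := by
  intro n
  induction n using Nat.strong_induction_on with
  | _ n ih =>
  intro V _ G hcard hch
  classical
  by_cases hcomp : ∀ u v : V, u ≠ v → G.Adj u v
  · exact Or.inl hcomp
  right
  push_neg at hcomp
  obtain ⟨a, b, hab, hnadj⟩ := hcomp
  -- separators
  set SepP : Finset V → Prop :=
    fun S => a ∉ S ∧ b ∉ S ∧ ∀ w : G.Walk a b, ∃ y ∈ w.support, y ∈ S with hSepP
  have hsep0 : SepP ((Finset.univ.erase a).erase b) := by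
    refine ⟨by simp [Finset.mem_erase, hab], by simp, ?_⟩
    intro w
    cases w with
    | nil => exact absurd rfl hab
    | @cons _ x _ h w' =>
      refine ⟨x, by simp, ?_⟩
      simp only [Finset.mem_erase, Finset.mem_univ, and_true]
      exact ⟨fun hxb => hnadj (hxb ▸ h), fun hxa => G.irrefl (hxa ▸ h)⟩
  obtain ⟨S, hSmem, hSmin⟩ := Finset.exists_min_image
    (Finset.univ.filter SepP) Finset.card
    ⟨_, Finset.mem_filter.mpr ⟨Finset.mem_univ _, hsep0⟩⟩
  have hSsep : SepP S := (Finset.mem_filter.mp hSmem).2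
  obtain ⟨haS, hbS, hSsep'⟩ := hSsep
  set A : Set V := {x | ∃ w : G.Walk a x, ∀ y ∈ w.support, y ∉ S} with hA
  set B : Set V := {x | ∃ w : G.Walk b x, ∀ y ∈ w.support, y ∉ S} with hB
  have haA : a ∈ A := ⟨Walk.nil, by simpa using haS⟩
  have hbB : b ∈ B := ⟨Walk.nil, by simpa using hbS⟩
  have hAS : ∀ x ∈ A, x ∉ S := fun x ⟨w, hw⟩ => hw x w.end_mem_support
  have hBS : ∀ x ∈ B, x ∉ S := fun x ⟨w, hw⟩ => hw x w.end_mem_support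
  have hAB : ∀ x, x ∈ A → x ∈ B → False := by
    rintro x ⟨w1, h1⟩ ⟨w2, h2⟩
    obtain ⟨y, hy, hyS⟩ := hSsep' (w1.append w2.reverse)
    rw [Walk.mem_support_append_iff] at hy
    rcases hy with hy | hy
    · exact h1 y hy hyS
    · rw [Walk.support_reverse, List.mem_reverse] at hy
      exact h2 y hy hyS
  have hclosA : ∀ x ∈ A, ∀ z, G.Adj x z → z ∉ S → z ∈ A := by
    rintro x ⟨w, hw⟩ z hadj hzS
    refine ⟨w.append (Walk.cons hadj Walk.nil), ?_⟩
    intro y hy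
    rw [Walk.mem_support_append_iff] at hy
    rcases hy with hy | hy
    · exact hw y hy
    · simp only [Walk.support_cons, Walk.support_nil, List.mem_cons,
        List.mem_singleton, List.not_mem_nil, or_false] at hy
      rcases hy with rfl | rfl
      · exact hw _ w.end_mem_support
      · exact hzS
  have hclosB : ∀ x ∈ B, ∀ z, G.Adj x z → z ∉ S → z ∈ B := by
    rintro x ⟨w, hw⟩ z hadj hzS
    refine ⟨w.append (Walk.cons hadj Walk.nil), ?_⟩
    intro y hy
    rw [Walk.mem_support_append_iff] at hy
    rcases hy with hy | hy
    · exact hw y hy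
    · simp only [Walk.support_cons, Walk.support_nil, List.mem_cons,
        List.mem_singleton, List.not_mem_nil, or_false] at hy
      rcases hy with rfl | rfl
      · exact hw _ w.end_mem_support
      · exact hzS
  have hprefA : ∀ x, ∀ (w : G.Walk a x), (∀ y ∈ w.support, y ∉ S) →
      ∀ z ∈ w.support, z ∈ A := by
    intro x w hw z hz
    exact ⟨w.takeUntil z hz, fun y hy => hw y (w.support_takeUntil_subset hz hy)⟩
  have hprefB : ∀ x, ∀ (w : G.Walk b x), (∀ y ∈ w.support, y ∉ S) →
      ∀ z ∈ w.support, z ∈ B := by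
    intro x w hw z hz
    exact ⟨w.takeUntil z hz, fun y hy => hw y (w.support_takeUntil_subset hz hy)⟩
  -- every element of S has a neighbor in A and in B
  have hnbrA : ∀ s ∈ S, ∃ x ∈ A, G.Adj x s := by
    intro s hs
    have hlt : (S.erase s).card < S.card := Finset.card_erase_lt_of_mem hs
    have hnot : ¬SepP (S.erase s) := by
      intro hsp
      have := hSmin _ (Finset.mem_filter.mpr ⟨Finset.mem_univ _, hsp⟩)
      omega
    rw [hSepP] at hnot
    have hexw : ∃ w : G.Walk a b, ∀ y ∈ w.support, y ∉ S.erase s := by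
      by_contra hno
      push_neg at hno
      exact hnot ⟨by simp [haS], by simp [hbS], hno⟩
    obtain ⟨w, hw⟩ := hexw
    have hinv : ∀ y ∈ w.support, y ≠ s → y ∉ (S : Set V) := by
      intro y hy hys hyS
      exact hw y hy (Finset.mem_erase.mpr ⟨hys, hyS⟩)
    have hsm : s ∈ w.support := by
      obtain ⟨y, hy, hyS⟩ := hSsep' w
      by_contra hns
      exact hinv y hy (fun hys => hns (hys ▸ hy)) hyS
    have has : a ≠ s := fun h => haS (h ▸ hs)
    obtain ⟨x, hxadj, q, hq⟩ := reach_adj (S : Set V) (w.takeUntil s hsm)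
      (fun y hy hys => hinv y (w.support_takeUntil_subset hsm hy) hys) has
    exact ⟨x, ⟨q, fun y hy => (hq y hy).1⟩, hxadj⟩
  have hnbrB : ∀ s ∈ S, ∃ x ∈ B, G.Adj x s := by
    intro s hs
    have hlt : (S.erase s).card < S.card := Finset.card_erase_lt_of_mem hs
    have hnot : ¬SepP (S.erase s) := by
      intro hsp
      have := hSmin _ (Finset.mem_filter.mpr ⟨Finset.mem_univ _, hsp⟩)
      omega
    rw [hSepP] at hnot
    have hexw : ∃ w : G.Walk a b, ∀ y ∈ w.support, y ∉ S.erase s := by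
      by_contra hno
      push_neg at hno
      exact hnot ⟨by simp [haS], by simp [hbS], hno⟩
    obtain ⟨w, hw⟩ := hexw
    have hinv : ∀ y ∈ w.support, y ≠ s → y ∉ (S : Set V) := by
      intro y hy hys hyS
      exact hw y hy (Finset.mem_erase.mpr ⟨hys, hyS⟩)
    have hsm : s ∈ w.reverse.support := by
      rw [Walk.support_reverse, List.mem_reverse]
      obtain ⟨y, hy, hyS⟩ := hSsep' w
      by_contra hns
      exact hinv y hy (fun hys => hns (hys ▸ hy)) hyS
    have hbs : b ≠ s := fun h => hbS (h ▸ hs)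
    obtain ⟨x, hxadj, q, hq⟩ := reach_adj (S : Set V) (w.reverse.takeUntil s hsm)
      (fun y hy hys => hinv y (by
        have := w.reverse.support_takeUntil_subset hsm hy
        rwa [Walk.support_reverse, List.mem_reverse] at this) hys) hbs
    exact ⟨x, ⟨q, fun y hy => (hq y hy).1⟩, hxadj⟩
  -- S is a clique
  have hSclique : ∀ x ∈ S, ∀ y ∈ S, x ≠ y → G.Adj x y := by
    intro x hxS y hyS hxy
    by_contra hnxy
    -- minimal interior-A path
    have hwalkC : ∀ (C : Set V) (c₀ : V), c₀ ∈ C →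
        (∀ x ∈ C, ∀ z, G.Adj x z → z ∉ S → z ∈ C) →
        (∀ s' ∈ S, ∃ c ∈ C, G.Adj c s') →
        (∀ u' ∈ C, ∀ v' ∈ C, ∃ w : G.Walk u' v', ∀ z ∈ w.support, z ∈ C) →
        ∃ p : G.Walk x y, p.IsPath ∧ (∀ z ∈ p.support, z = x ∨ z = y ∨ z ∈ C) ∧
          (∀ w : G.Walk x y, (∀ z ∈ w.support, z = x ∨ z = y ∨ z ∈ C) →
            p.length ≤ w.length) := by
      intro C c₀ hc₀ hclos hnb hconn
      obtain ⟨cx, hcx, hcxadj⟩ := hnb x hxS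
      obtain ⟨cy, hcy, hcyadj⟩ := hnb y hyS
      obtain ⟨w0, hw0⟩ := hconn cx hcx cy hcy
      set L : Set ℕ := {m | ∃ w : G.Walk x y,
        (∀ z ∈ w.support, z = x ∨ z = y ∨ z ∈ C) ∧ w.length = m} with hL
      have hLne : L.Nonempty := by
        refine ⟨_, Walk.cons hcxadj.symm (w0.append (Walk.cons hcyadj Walk.nil)), ?_, rfl⟩
        intro z hz
        rw [Walk.support_cons, List.mem_cons] at hz
        rcases hz with rfl | hz
        · exact Or.inl rfl
        · rw [Walk.mem_support_append_iff] at hz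
          rcases hz with hz | hz
          · exact Or.inr (Or.inr (hw0 z hz))
          · simp only [Walk.support_cons, Walk.support_nil, List.mem_cons,
              List.mem_singleton, List.not_mem_nil, or_false] at hz
            rcases hz with rfl | rfl
            · exact Or.inr (Or.inr hcy)
            · exact Or.inr (Or.inl rfl)
      obtain ⟨w1, hw1c, hw1l⟩ := Nat.sInf_mem hLne
      refine ⟨w1.bypass, w1.bypass_isPath, ?_, ?_⟩
      · intro z hz
        exact hw1c z (w1.support_bypass_subset hz)
      · intro w hwc
        have h1 : w1.bypass.length ∈ L :=
          ⟨w1.bypass, fun z hz => hw1c z (w1.support_bypass_subset hz), rfl⟩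
        have h2 : w.length ∈ L := ⟨w, hwc, rfl⟩
        have := Nat.sInf_le h2
        have h3 := w1.length_bypass_le
        omega
    obtain ⟨p, hp, hpc, hpmin⟩ := hwalkC A a haA hclosA hnbrA
      (fun u' hu' v' hv' => by
        obtain ⟨w1, h1⟩ := hu'
        obtain ⟨w2, h2⟩ := hv'
        refine ⟨w1.reverse.append w2, ?_⟩
        intro z hz
        rw [Walk.mem_support_append_iff] at hz
        rcases hz with hz | hz
        · rw [Walk.support_reverse, List.mem_reverse] at hz
          exact hprefA _ w1 h1 z hz
        · exact hprefA _ w2 h2 z hz)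
    obtain ⟨q, hq, hqc, hqmin⟩ := hwalkC B b hbB hclosB hnbrB
      (fun u' hu' v' hv' => by
        obtain ⟨w1, h1⟩ := hu'
        obtain ⟨w2, h2⟩ := hv'
        refine ⟨w1.reverse.append w2, ?_⟩
        intro z hz
        rw [Walk.mem_support_append_iff] at hz
        rcases hz with hz | hz
        · rw [Walk.support_reverse, List.mem_reverse] at hz
          exact hprefB _ w1 h1 z hz
        · exact hprefB _ w2 h2 z hz)
    -- lengths at least 2
    have hplen : 2 ≤ p.length := by
      rcases Nat.lt_or_ge p.length 2 with h | h
      · rcases (show p.length = 0 ∨ p.length = 1 by omega) with hcase | hcase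
        · exact absurd (p.eq_of_length_eq_zero hcase) hxy
        · exact absurd (G.mem_edgeSet.mp (p.edges_subset_edgeSet
            (edge_mem_of_length_one p hcase))) hnxy
      · exact h
    have hqlen : 2 ≤ q.length := by
      rcases Nat.lt_or_ge q.length 2 with h | h
      · rcases (show q.length = 0 ∨ q.length = 1 by omega) with hcase | hcase
        · exact absurd (q.eq_of_length_eq_zero hcase) hxy
        · exact absurd (G.mem_edgeSet.mp (q.edges_subset_edgeSet
            (edge_mem_of_length_one q hcase))) hnxy
      · exact h
    have hxA : x ∉ A := fun h => hAS x h hxS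
    have hxB : x ∉ B := fun h => hBS x h hxS
    have hyA : y ∉ A := fun h => hAS y h hyS
    have hyB : y ∉ B := fun h => hBS y h hyS
    -- the cycle
    set cyc : G.Walk x x := p.append q.reverse with hcyc
    have hcyclen : 3 < cyc.length := by
      rw [hcyc, Walk.length_append, Walk.length_reverse]
      omega
    have hpedge_cyc : ∀ e ∈ p.edges, e ∈ cyc.edges := by
      intro e he
      rw [hcyc, Walk.edges_append, List.mem_append]
      exact Or.inl he
    have hqedge_cyc : ∀ e ∈ q.edges, e ∈ cyc.edges := by
      intro e he
      rw [hcyc, Walk.edges_append, List.mem_append]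
      right
      rw [Walk.edges_reverse, List.mem_reverse]
      exact he
    have hcyccyc : cyc.IsCycle := by
      rw [Walk.isCycle_def]
      refine ⟨?_, ?_, ?_⟩
      · -- trail
        rw [Walk.isTrail_def, hcyc, Walk.edges_append, List.nodup_append]
        refine ⟨hp.isTrail.edges_nodup, hq.reverse.isTrail.edges_nodup, ?_⟩
        rintro e hep _ heq rfl
        rw [Walk.edges_reverse, List.mem_reverse] at heq
        induction e using Sym2.ind with
        | _ e1 e2 =>
          have h1p := p.fst_mem_support_of_mem_edges hep
          have h2p := p.snd_mem_support_of_mem_edges hep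
          have h1q := q.fst_mem_support_of_mem_edges heq
          have h2q := q.snd_mem_support_of_mem_edges heq
          have hne' : e1 ≠ e2 := (G.mem_edgeSet.mp (p.edges_subset_edgeSet hep)).ne
          have hc1 : e1 = x ∨ e1 = y := by
            rcases hpc e1 h1p with h | h | h
            · exact Or.inl h
            · exact Or.inr h
            · rcases hqc e1 h1q with h' | h' | h'
              · exact Or.inl h'
              · exact Or.inr h'
              · exact (hAB e1 h h').elim
          have hc2 : e2 = x ∨ e2 = y := by
            rcases hpc e2 h2p with h | h | h
            · exact Or.inl h
            · exact Or.inr h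
            · rcases hqc e2 h2q with h' | h' | h'
              · exact Or.inl h'
              · exact Or.inr h'
              · exact (hAB e2 h h').elim
          rcases hc1 with rfl | rfl <;> rcases hc2 with rfl | rfl
          · exact hne' rfl
          · exact hnxy (G.mem_edgeSet.mp (p.edges_subset_edgeSet hep))
          · exact hnxy (G.mem_edgeSet.mp (p.edges_subset_edgeSet hep)).symm
          · exact hne' rfl
      · intro hnil
        have := congrArg Walk.length hnil
        rw [hcyc, Walk.length_append, Walk.length_reverse] at this
        simp only [Walk.length_nil] at this
        omega
      · rw [hcyc, Walk.tail_support_append, List.nodup_append]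
        have hps := hp.support_nodup
        have hqrs := hq.reverse.support_nodup
        refine ⟨?_, ?_, ?_⟩
        · rw [Walk.support_eq_cons] at hps
          exact (List.nodup_cons.mp hps).2
        · rw [Walk.support_eq_cons] at hqrs
          exact (List.nodup_cons.mp hqrs).2
        · rintro z hzp _ hzq rfl
          have hzx : z ≠ x := by
            rw [Walk.support_eq_cons] at hps
            rintro rfl
            exact (List.nodup_cons.mp hps).1 hzp
          have hzy : z ≠ y := by
            rw [Walk.support_eq_cons] at hqrs
            rintro rfl
            exact (List.nodup_cons.mp hqrs).1 hzq
          have hzps : z ∈ p.support := List.mem_of_mem_tail hzp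
          have hzqs : z ∈ q.support := by
            have := List.mem_of_mem_tail hzq
            rwa [Walk.support_reverse, List.mem_reverse] at this
          rcases hpc z hzps with h | h | h
          · exact hzx h
          · exact hzy h
          · rcases hqc z hzqs with h' | h' | h'
            · exact hzx h'
            · exact hzy h'
            · exact hAB z h h'
    obtain ⟨x', y', hx', hy', hadj', he'⟩ := hch x cyc hcyccyc hcyclen
    -- locate x' and y'
    have hloc : ∀ z ∈ cyc.support, z ∈ p.support ∨ z ∈ q.support := by
      intro z hz
      rw [hcyc, Walk.mem_support_append_iff] at hz
      rcases hz with hz | hz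
      · exact Or.inl hz
      · rw [Walk.support_reverse, List.mem_reverse] at hz
        exact Or.inr hz
    have hcases : ∀ z ∈ cyc.support, z = x ∨ z = y ∨ z ∈ A ∨ z ∈ B := by
      intro z hz
      rcases hloc z hz with h | h
      · rcases hpc z h with h' | h' | h' <;> tauto
      · rcases hqc z h with h' | h' | h' <;> tauto
    have hmemp : ∀ z ∈ cyc.support, z ∉ B → z ∈ p.support := by
      intro z hz hzB
      rcases hloc z hz with h | h
      · exact h
      · rcases hqc z h with h' | h' | h'
        · exact h' ▸ p.start_mem_support
        · exact h' ▸ p.end_mem_support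
        · exact absurd h' hzB
    have hmemq : ∀ z ∈ cyc.support, z ∉ A → z ∈ q.support := by
      intro z hz hzA
      rcases hloc z hz with h | h
      · rcases hpc z h with h' | h' | h'
        · exact h' ▸ q.start_mem_support
        · exact h' ▸ q.end_mem_support
        · exact absurd h' hzA
      · exact h
    -- a chord inside p contradicts minimality
    have hshortp : x' ∈ p.support → y' ∈ p.support → False := by
      intro hxp hyp
      have hne'' : s(x', y') ∉ p.edges := fun h => he' (hpedge_cyc _ h)
      obtain ⟨w, hwsub, hwlen⟩ := walk_shortcut p hxp hyp hadj' hne''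
      have := hpmin w (fun z hz => hpc z (hwsub z hz))
      omega
    have hshortq : x' ∈ q.support → y' ∈ q.support → False := by
      intro hxq hyq
      have hne'' : s(x', y') ∉ q.edges := fun h => he' (hqedge_cyc _ h)
      obtain ⟨w, hwsub, hwlen⟩ := walk_shortcut q hxq hyq hadj' hne''
      have := hqmin w (fun z hz => hqc z (hwsub z hz))
      omega
    -- cross chords impossible
    have hcross : ∀ z1 z2, z1 ∈ A → z2 ∈ B → G.Adj z1 z2 → False := by
      intro z1 z2 h1 h2 hadj''
      exact hAB z2 (hclosA z1 h1 z2 hadj'' (hBS z2 h2)) h2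
    rcases hcases x' hx' with h1 | h1 | h1 | h1 <;>
      rcases hcases y' hy' with h2 | h2 | h2 | h2
    · exact hadj'.ne (h1.trans h2.symm)
    · exact hnxy (h1 ▸ h2 ▸ hadj')
    · exact hshortp (h1 ▸ p.start_mem_support) (hmemp y' hy' (fun hB' => hAB y' h2 hB'))
    · exact hshortq (h1 ▸ q.start_mem_support) (hmemq y' hy' (fun hA' => hAB y' hA' h2))
    · exact hnxy (h2 ▸ h1 ▸ hadj').symm
    · exact hadj'.ne (h1.trans h2.symm)
    · exact hshortp (h1 ▸ p.end_mem_support) (hmemp y' hy' (fun hB' => hAB y' h2 hB'))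
    · exact hshortq (h1 ▸ q.end_mem_support) (hmemq y' hy' (fun hA' => hAB y' hA' h2))
    · exact hshortp (hmemp x' hx' (fun hB' => hAB x' h1 hB')) (h2 ▸ p.start_mem_support)
    · exact hshortp (hmemp x' hx' (fun hB' => hAB x' h1 hB')) (h2 ▸ p.end_mem_support)
    · exact hshortp (hmemp x' hx' (fun hB' => hAB x' h1 hB'))
        (hmemp y' hy' (fun hB' => hAB y' h2 hB'))
    · exact hcross x' y' h1 h2 hadj'
    · exact hshortq (hmemq x' hx' (fun hA' => hAB x' hA' h1)) (h2 ▸ q.start_mem_support)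
    · exact hshortq (hmemq x' hx' (fun hA' => hAB x' hA' h1)) (h2 ▸ q.end_mem_support)
    · exact hcross y' x' h2 h1 hadj'.symm
    · exact hshortq (hmemq x' hx' (fun hA' => hAB x' hA' h1))
        (hmemq y' hy' (fun hA' => hAB y' hA' h2))
  -- extraction of a simplicial vertex on each side
  have hextract : ∀ (C : Set V) (c₀ : V), c₀ ∈ C → (∀ x ∈ C, x ∉ S) →
      (∀ x ∈ C, ∀ z, G.Adj x z → z ∉ S → z ∈ C) →
      (∃ z, z ∉ C ∧ z ∉ S) → ∃ x ∈ C, Simplicial G x := by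
    intro C c₀ hc₀ hCS hclos ⟨zout, hzC, hzS⟩
    set CF : Finset V := Finset.univ.filter (· ∈ C) with hCF
    set UF : Finset V := CF ∪ S with hUF
    have hmemU : ∀ w : V, w ∈ (↑UF : Set V) ↔ (w ∈ C ∨ w ∈ S) := by
      intro w
      simp [hUF, hCF]
    have hzU : zout ∉ UF := by
      intro h
      rw [← Finset.mem_coe, hmemU] at h
      tauto
    have hcard : Fintype.card (↑UF : Set V) < n := by
      have hUF' : Fintype.card (↑UF : Set V) = UF.card := by simp
      rw [hUF']
      have h1 : UF ⊆ Finset.univ.erase zout := by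
        intro w hw
        rw [Finset.mem_erase]
        exact ⟨fun h => hzU (h ▸ hw), Finset.mem_univ _⟩
      have h2 := Finset.card_le_card h1
      rw [Finset.card_erase_of_mem (Finset.mem_univ _)] at h2
      rw [Finset.card_univ, hcard] at h2
      have hnpos : 0 < n := by
        rw [← hcard, Fintype.card_pos_iff]
        exact ⟨a⟩
      omega
    have hindchordal := isChordal_induce hch (↑UF : Set V)
    have hUadj : ∀ (w1 w2 : (↑UF : Set V)), (G.induce (↑UF : Set V)).Adj w1 w2 ↔ G.Adj w1.1 w2.1 :=
      fun w1 w2 => Iff.rfl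
    have hnbhd : ∀ x ∈ C, ∀ z, G.Adj x z → z ∈ (↑UF : Set V) := by
      intro x hx z hadj
      rw [hmemU]
      by_cases hzS' : z ∈ S
      · exact Or.inr hzS'
      · exact Or.inl (hclos x hx z hadj hzS')
    rcases ih (Fintype.card (↑UF : Set V)) hcard (G.induce (↑UF : Set V)) rfl hindchordal with
      hcompl | ⟨s', t', hst, hnst, hsimps, hsimpt⟩
    · refine ⟨c₀, hc₀, ?_⟩
      intro p q hp hq hpq
      have hpU : p ∈ (↑UF : Set V) := hnbhd c₀ hc₀ p hp
      have hqU : q ∈ (↑UF : Set V) := hnbhd c₀ hc₀ q hq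
      have := hcompl ⟨p, hpU⟩ ⟨q, hqU⟩ (fun h => hpq (congrArg Subtype.val h))
      exact (hUadj _ _).mp this
    · have hpick : ∃ w' : (↑UF : Set V), w'.1 ∈ C ∧
          (∀ p q : (↑UF : Set V), (G.induce (↑UF : Set V)).Adj w' p →
            (G.induce (↑UF : Set V)).Adj w' q → p ≠ q →
            (G.induce (↑UF : Set V)).Adj p q) := by
        by_cases hsS : s'.1 ∈ S
        · by_cases htS : t'.1 ∈ S
          · exfalso
            have hne' : s'.1 ≠ t'.1 := fun h => hst (Subtype.ext h)
            exact hnst ((hUadj s' t').mpr (hSclique _ hsS _ htS hne'))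
          · have htC : t'.1 ∈ C := by
              have := (hmemU t'.1).mp t'.2
              tauto
            exact ⟨t', htC, hsimpt⟩
        · have hsC : s'.1 ∈ C := by
            have := (hmemU s'.1).mp s'.2
            tauto
          exact ⟨s', hsC, hsimps⟩
      obtain ⟨w', hwC, hwsimp⟩ := hpick
      refine ⟨w'.1, hwC, ?_⟩
      intro p q hp hq hpq
      have hpU : p ∈ (↑UF : Set V) := hnbhd w'.1 hwC p hp
      have hqU : q ∈ (↑UF : Set V) := hnbhd w'.1 hwC q hq
      have := hwsimp ⟨p, hpU⟩ ⟨q, hqU⟩ ((hUadj _ _).mpr hp) ((hUadj _ _).mpr hq)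
        (fun h => hpq (congrArg Subtype.val h))
      exact (hUadj _ _).mp this
  obtain ⟨xA, hxA, hsimpA⟩ := hextract A a haA hAS hclosA
    ⟨b, fun h => hAB b h hbB, hbS⟩
  obtain ⟨xB, hxB, hsimpB⟩ := hextract B b hbB hBS hclosB
    ⟨a, fun h => hAB a haA h, haS⟩
  refine ⟨xA, xB, ?_, ?_, hsimpA, hsimpB⟩
  · rintro rfl
    exact hAB xA hxA hxB
  · intro hadj''
    exact hAB xB (hclosA xA hxA xB hadj'' (hBS xB hxB)) hxB
end Dirac

section AddLeaf
variable {ι : Type*}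

/-- attach a new leaf (the `none` vertex) to a graph at `t₀` -/
def addLeaf (T : SimpleGraph ι) (t₀ : ι) : SimpleGraph (Option ι) where
  Adj x y :=
    match x, y with
    | some a, some b => T.Adj a b
    | some a, none => a = t₀
    | none, some b => b = t₀
    | none, none => False
  symm := by
    refine ⟨?_⟩
    rintro (_ | a) (_ | b) h
    · exact h
    · exact h
    · exact h
    · exact T.adj_symm h
  loopless := by
    refine ⟨?_⟩
    rintro (_ | a) h
    · exact h
    · exact T.irrefl h

variable {T : SimpleGraph ι} {t₀ : ι}

lemma addLeaf_adj_none {x : Option ι} (h : (addLeaf T t₀).Adj none x) : x = some t₀ := by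
  cases x with
  | none => exact h.elim
  | some b => exact congrArg some h

/-- the canonical embedding hom -/
@[reducible]
def homSome (T : SimpleGraph ι) (t₀ : ι) : T →g addLeaf T t₀ :=
  ⟨some, fun {a b} h => h⟩

lemma addLeaf_walk_down {x y : Option ι} (w : (addLeaf T t₀).Walk x y) :
    (∀ z ∈ w.support, z ≠ none) → ∀ {a b : ι}, x = some a → y = some b →
    ∃ w' : T.Walk a b, w.support = w'.support.map some ∧
      w.edges = w'.edges.map (Sym2.map some) := by
  induction w with
  | nil =>
    intro hn a b hx hy
    subst hx
    obtain rfl : a = b := Option.some.inj hy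
    exact ⟨Walk.nil, by simp, by simp⟩
  | @cons u z y' h w1 ih =>
    intro hn a b hx hy
    subst hx
    have hz : z ≠ none := hn z (by simp)
    obtain ⟨c, rfl⟩ : ∃ c, z = some c := Option.ne_none_iff_exists'.mp hz
    have hTadj : T.Adj a c := h
    obtain ⟨w', hs, he⟩ := ih (fun z' hz' => hn z' (by simp [hz'])) rfl hy
    refine ⟨Walk.cons hTadj w', ?_, ?_⟩
    · rw [Walk.support_cons, Walk.support_cons, hs, List.map_cons]
    · rw [Walk.edges_cons, Walk.edges_cons, he, List.map_cons]
      rfl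

lemma addLeaf_isTree (hT : T.IsTree) : (addLeaf T t₀).IsTree := by
  constructor
  · rw [connected_iff]
    refine ⟨?_, ⟨none⟩⟩
    have hreach : ∀ x : Option ι, (addLeaf T t₀).Reachable x (some t₀) := by
      intro x
      cases x with
      | none =>
        exact (show (addLeaf T t₀).Adj none (some t₀) from rfl).reachable
      | some a =>
        obtain ⟨w⟩ := hT.1 a t₀
        exact ⟨w.map (homSome T t₀)⟩
    exact fun x y => (hreach x).trans (hreach y).symm
  · intro x c hc
    classical
    by_cases hn : none ∈ c.support
    · set c' := c.rotate none hn with hc'def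
      have hc' : c'.IsCycle := hc.rotate hn
      have hlen : 3 ≤ c'.length := hc'.three_le_length
      have h1 := c'.adj_getVert_succ (show 0 < c'.length by omega)
      rw [c'.getVert_zero] at h1
      have h2 := c'.adj_getVert_succ (show c'.length - 1 < c'.length by omega)
      rw [show c'.length - 1 + 1 = c'.length by omega, c'.getVert_length] at h2
      have e1 : c'.getVert 1 = some t₀ := addLeaf_adj_none h1
      have e2 : c'.getVert (c'.length - 1) = some t₀ := addLeaf_adj_none h2.symm
      exact cycle_getVert_ne hc' (show (1:ℕ) < c'.length - 1 by omega)
        (by omega) (by omega) (e1.trans e2.symm)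
    · have hx : x ≠ none := fun h => hn (h ▸ c.start_mem_support)
      obtain ⟨a, rfl⟩ : ∃ a, x = some a := Option.ne_none_iff_exists'.mp hx
      obtain ⟨w', hs, he⟩ := addLeaf_walk_down c
        (fun z hz hz' => hn (hz' ▸ hz)) rfl rfl
      apply hT.2 w'
      rw [Walk.isCycle_def] at hc ⊢
      refine ⟨?_, ?_, ?_⟩
      · rw [Walk.isTrail_def]
        have := hc.1.edges_nodup
        rw [he] at this
        exact this.of_map _
      · intro hnil
        apply hc.2.1
        have h0 : w'.length = 0 := by rw [hnil]; rfl
        have hsl := congrArg List.length hs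
        rw [List.length_map, Walk.length_support, Walk.length_support, h0] at hsl
        exact Walk.nil_iff_eq_nil.mp (Walk.nil_iff_length_eq.mpr (by omega))
      · have := hc.2.2
        rw [hs, ← List.map_tail] at this
        exact this.of_map _
end AddLeaf
section AddLeafClosed
variable {ι : Type*} {T : SimpleGraph ι} {t₀ : ι}

lemma homSome_injective : Function.Injective (homSome T t₀ : T →g addLeaf T t₀) :=
  fun _ _ h => Option.some.inj h

lemma addLeaf_pathClosed_image (hT : T.IsTree) {S : Set ι} (hpc : PathClosed T S) :
    PathClosed (addLeaf T t₀) (some '' S) := by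
  classical
  rintro x y ⟨a, haS, rfl⟩ ⟨b, hbS, rfl⟩ P hP z hz
  obtain ⟨w⟩ := hT.1 a b
  set w' : T.Walk a b := (w.toPath : T.Walk a b) with hw'def
  have hw' : w'.IsPath := w.toPath.2
  have hmap : (w'.map (homSome T t₀)).IsPath :=
    Walk.map_isPath_of_injective homSome_injective hw'
  have huniq : P = w'.map (homSome T t₀) := congrArg Subtype.val
    ((addLeaf_isTree hT).2.path_unique ⟨P, hP⟩ ⟨w'.map (homSome T t₀), hmap⟩)
  rw [huniq, Walk.support_map, List.mem_map] at hz
  obtain ⟨z₀, hz₀, rfl⟩ := hz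
  exact ⟨z₀, hpc a b haS hbS w' hw' z₀ hz₀, rfl⟩

lemma addLeaf_pathClosed_insert (hT : T.IsTree) {S : Set ι} (hpc : PathClosed T S)
    (ht₀ : t₀ ∈ S) : PathClosed (addLeaf T t₀) (insert none (some '' S)) := by
  classical
  have hT' := addLeaf_isTree (t₀ := t₀) hT
  -- canonical path from none to some b
  have hkey : ∀ (b : ι), b ∈ S → ∀ (P : (addLeaf T t₀).Walk none (some b)), P.IsPath →
      ∀ z ∈ P.support, z ∈ insert none (some '' S) := by
    intro b hbS P hP z hz
    obtain ⟨w⟩ := hT.1 t₀ b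
    set w' : T.Walk t₀ b := (w.toPath : T.Walk t₀ b) with hw'def
    have hw' : w'.IsPath := w.toPath.2
    have hPc : ((Walk.cons (show (addLeaf T t₀).Adj none (some t₀) from rfl)
        (w'.map (homSome T t₀)))).IsPath := by
      rw [Walk.cons_isPath_iff]
      refine ⟨Walk.map_isPath_of_injective homSome_injective hw', ?_⟩
      rw [Walk.support_map, List.mem_map]
      rintro ⟨z₀, _, hz₀⟩
      exact nomatch hz₀
    have huniq : P = Walk.cons (show (addLeaf T t₀).Adj none (some t₀) from rfl)
        (w'.map (homSome T t₀)) := congrArg Subtype.val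
      (hT'.2.path_unique ⟨P, hP⟩ ⟨_, hPc⟩)
    rw [huniq, Walk.support_cons, List.mem_cons] at hz
    rcases hz with rfl | hz
    · exact Set.mem_insert _ _
    · rw [Walk.support_map, List.mem_map] at hz
      obtain ⟨z₀, hz₀, rfl⟩ := hz
      exact Set.mem_insert_of_mem _ ⟨z₀, hpc t₀ b ht₀ hbS w' hw' z₀ hz₀, rfl⟩
  intro x y hx hy P hP z hz
  have hmemS : ∀ w : Option ι, w ∈ insert none (some '' S) → w = none ∨ ∃ c ∈ S, w = some c := by
    intro w hw
    rcases hw with h | ⟨c, hc, rfl⟩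
    · exact Or.inl h
    · exact Or.inr ⟨c, hc, rfl⟩
  rcases hmemS x hx with rfl | ⟨a, haS, rfl⟩
  · rcases hmemS y hy with rfl | ⟨b, hbS, rfl⟩
    · -- none to none: nil
      have : P = Walk.nil := IsPath.eq_nil_of_loop hP
      subst this
      simp only [Walk.support_nil, List.mem_singleton] at hz
      subst hz
      exact Set.mem_insert _ _
    · exact hkey b hbS P hP z hz
  · rcases hmemS y hy with rfl | ⟨b, hbS, rfl⟩
    · have hz' : z ∈ P.reverse.support := by
        rw [Walk.support_reverse, List.mem_reverse]; exact hz
      exact hkey a haS P.reverse hP.reverse z hz'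
    · have := addLeaf_pathClosed_image (t₀ := t₀) hT hpc (some a) (some b)
        ⟨a, haS, rfl⟩ ⟨b, hbS, rfl⟩ P hP z hz
      exact Set.mem_insert_of_mem _ this

lemma addLeaf_pathClosed_none : PathClosed (addLeaf T t₀) {none} := by
  rintro x y rfl rfl P hP z hz
  have : P = Walk.nil := IsPath.eq_nil_of_loop hP
  subst this
  simpa using hz

end AddLeafClosed

section Forward

theorem rep_of_chordal : ∀ (n : ℕ) (V : Type) [Fintype V] (G : SimpleGraph V),
    Fintype.card V = n → IsChordal G →
    ∃ (ι : Type) (T : SimpleGraph ι) (f : V → Set ι),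
      T.IsTree ∧ (∀ v, (f v).Nonempty) ∧ (∀ v, (T.induce (f v)).Connected) ∧
      ∀ u v : V, u ≠ v → (G.Adj u v ↔ (f u ∩ f v).Nonempty) := by
  intro n
  induction n using Nat.strong_induction_on with
  | _ n ih =>
  intro V _ G hcard hch
  classical
  rcases Nat.eq_zero_or_pos n with rfl | hpos
  · have hempty : IsEmpty V := Fintype.card_eq_zero_iff.mp hcard
    refine ⟨PUnit, ⊥, fun v => isEmptyElim v, ?_, fun v => isEmptyElim v,
      fun v => isEmptyElim v, fun u => isEmptyElim u⟩
    constructor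
    · rw [connected_iff]
      exact ⟨SimpleGraph.preconnected_bot, ⟨PUnit.unit⟩⟩
    · exact SimpleGraph.isAcyclic_bot
  · have hnV : Nonempty V := Fintype.card_pos_iff.mp (hcard ▸ hpos)
    have hsimp : ∃ v, Simplicial G v := by
      rcases dirac_strong n G hcard hch with hcompl | ⟨s, t, _, _, hs, _⟩
      · obtain ⟨v⟩ := hnV
        exact ⟨v, fun p q _ _ hpq => hcompl p q hpq⟩
      · exact ⟨s, hs⟩
    obtain ⟨v, hv⟩ := hsimp
    set s : Set V := {u | u ≠ v} with hsdef
    have hcard' : Fintype.card s < n := by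
      rw [← hcard]
      exact Fintype.card_subtype_lt (x := v) (fun h => h rfl)
    obtain ⟨ι, T, f, hT, hfne, hfconn, hfiff⟩ :=
      ih _ hcard' ↥s (G.induce s) rfl (isChordal_induce hch s)
    have hpcf : ∀ u : s, PathClosed T (f u) :=
      fun u => pathClosed_of_connected hT.2 (hfconn u)
    have hι : Nonempty ι := hT.1.nonempty
    set nbrsF : Finset ↥s := Finset.univ.filter (fun u => G.Adj v u.1) with hnbrsF
    have hhelly : ∃ t₀ : ι, ∀ u ∈ nbrsF, t₀ ∈ f u := by
      rcases Finset.eq_empty_or_nonempty nbrsF with he | hne'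
      · exact ⟨Classical.arbitrary ι, by simp [he]⟩
      · apply helly_finset hT nbrsF f (fun u _ => hpcf u) ?_ hne'
        intro i hi j hj
        by_cases hij : i = j
        · subst hij
          simpa [Set.inter_self] using hfne i
        · have hvi : G.Adj v i.1 := by
            rw [hnbrsF, Finset.mem_filter] at hi
            exact hi.2
          have hvj : G.Adj v j.1 := by
            rw [hnbrsF, Finset.mem_filter] at hj
            exact hj.2
          have hadj : G.Adj i.1 j.1 := hv i.1 j.1 hvi hvj
            (fun h => hij (Subtype.ext h))
          exact (hfiff i j hij).mp hadj
    obtain ⟨t₀, ht₀⟩ := hhelly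
    have hT' := addLeaf_isTree (t₀ := t₀) hT
    set f' : V → Set (Option ι) := fun u =>
      if h : u = v then {none} else
        (if G.Adj v u then insert none (some '' f ⟨u, h⟩) else some '' f ⟨u, h⟩) with hf'
    have hf'v : f' v = {none} := by simp [hf']
    have hf'adj : ∀ (u : V) (h : u ≠ v), G.Adj v u →
        f' u = insert none (some '' f ⟨u, h⟩) := by
      intro u h hadj
      simp [hf', h, hadj]
    have hf'nadj : ∀ (u : V) (h : u ≠ v), ¬G.Adj v u → f' u = some '' f ⟨u, h⟩ := by
      intro u h hadj
      simp [hf', h, hadj]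
    have ht₀f : ∀ (u : V) (h : u ≠ v), G.Adj v u → t₀ ∈ f ⟨u, h⟩ := by
      intro u h hadj
      exact ht₀ ⟨u, h⟩ (by rw [hnbrsF, Finset.mem_filter]; exact ⟨Finset.mem_univ _, hadj⟩)
    have hnone_mem : ∀ (u : V) (h : u ≠ v), none ∈ f' u ↔ G.Adj v u := by
      intro u h
      constructor
      · intro hmem
        by_contra hnadj
        rw [hf'nadj u h hnadj] at hmem
        obtain ⟨z₀, _, hz₀⟩ := hmem
        exact nomatch hz₀
      · intro hadj
        rw [hf'adj u h hadj]
        exact Set.mem_insert _ _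
    have hsome_mem : ∀ (u : V) (h : u ≠ v) (z : ι), some z ∈ f' u ↔ z ∈ f ⟨u, h⟩ := by
      intro u h z
      by_cases hadj : G.Adj v u
      · rw [hf'adj u h hadj]
        constructor
        · rintro (h' | ⟨z₀, hz₀, hz₀'⟩)
          · exact nomatch h'
          · rwa [← Option.some.inj hz₀']
        · intro hz
          exact Set.mem_insert_of_mem _ ⟨z, hz, rfl⟩
      · rw [hf'nadj u h hadj]
        constructor
        · rintro ⟨z₀, hz₀, hz₀'⟩
          rwa [← Option.some.inj hz₀']
        · intro hz
          exact ⟨z, hz, rfl⟩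
    refine ⟨Option ι, addLeaf T t₀, f', hT', ?_, ?_, ?_⟩
    · -- nonempty
      intro u
      by_cases h : u = v
      · subst h
        rw [hf'v]
        exact ⟨none, rfl⟩
      · obtain ⟨z, hz⟩ := hfne ⟨u, h⟩
        exact ⟨some z, (hsome_mem u h z).mpr hz⟩
    · -- connectivity
      intro u
      by_cases h : u = v
      · subst h
        rw [hf'v]
        exact connected_of_pathClosed hT'.1 ⟨none, rfl⟩ addLeaf_pathClosed_none
      · by_cases hadj : G.Adj v u
        · rw [hf'adj u h hadj]
          exact connected_of_pathClosed hT'.1 ⟨none, Set.mem_insert _ _⟩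
            (addLeaf_pathClosed_insert hT (hpcf ⟨u, h⟩) (ht₀f u h hadj))
        · rw [hf'nadj u h hadj]
          obtain ⟨z, hz⟩ := hfne ⟨u, h⟩
          exact connected_of_pathClosed hT'.1 ⟨some z, ⟨z, hz, rfl⟩⟩
            (addLeaf_pathClosed_image hT (hpcf ⟨u, h⟩))
    · -- adjacency iff intersection
      intro u w huw
      by_cases hu : u = v
      · subst hu
        rw [hf'v]
        have hw : w ≠ u := fun h => huw h.symm
        constructor
        · intro hadj
          exact ⟨none, rfl, (hnone_mem w hw).mpr hadj⟩
        · rintro ⟨z, hz1, hz2⟩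
          rw [Set.mem_singleton_iff] at hz1
          subst hz1
          exact (hnone_mem w hw).mp hz2
      · by_cases hw : w = v
        · subst hw
          rw [hf'v]
          constructor
          · intro hadj
            exact ⟨none, (hnone_mem u hu).mpr hadj.symm, rfl⟩
          · rintro ⟨z, hz1, hz2⟩
            rw [Set.mem_singleton_iff] at hz2
            subst hz2
            exact ((hnone_mem u hu).mp hz1).symm
        · constructor
          · intro hadj
            have : (G.induce s).Adj ⟨u, hu⟩ ⟨w, hw⟩ := hadj
            obtain ⟨z, hz1, hz2⟩ := (hfiff ⟨u, hu⟩ ⟨w, hw⟩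
              (fun h => huw (congrArg Subtype.val h))).mp this
            exact ⟨some z, (hsome_mem u hu z).mpr hz1, (hsome_mem w hw z).mpr hz2⟩
          · rintro ⟨z, hz1, hz2⟩
            cases z with
            | none =>
              have h1 := (hnone_mem u hu).mp hz1
              have h2 := (hnone_mem w hw).mp hz2
              exact hv u w h1 h2 huw
            | some z₀ =>
              have h1 := (hsome_mem u hu z₀).mp hz1
              have h2 := (hsome_mem w hw z₀).mp hz2
              have := (hfiff ⟨u, hu⟩ ⟨w, hw⟩
                (fun h => huw (congrArg Subtype.val h))).mpr ⟨z₀, h1, h2⟩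
              exact this
end Forward

end GavrilAux

/-- Gavril: a graph `G` is chordal iff `G` is the intersection graph of a family of
subtrees of a tree: there are a tree `T` and an assignment to every vertex `v` of `G`
of a nonempty set `f v` of nodes of `T` inducing a connected subtree, such that two
distinct vertices of `G` are adjacent iff the corresponding subtrees intersect. -/
theorem isChordal_iff_intersectionGraph_of_subtrees {V : Type} [Fintype V]
    (G : SimpleGraph V) :
    IsChordal G ↔
      ∃ (ι : Type) (T : SimpleGraph ι) (f : V → Set ι),
        T.IsTree ∧ (∀ v, (f v).Nonempty) ∧ (∀ v, (T.induce (f v)).Connected) ∧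
        ∀ u v : V, u ≠ v → (G.Adj u v ↔ (f u ∩ f v).Nonempty) := by
  constructor
  · intro hch
    exact rep_of_chordal (Fintype.card V) V G rfl hch
  · rintro ⟨ι, T, f, hT, h1, h2, h3⟩
    exact isChordal_of_subtrees hT h1 h2 h3
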